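/- Let H be a Hopf algebra over ℂ and (ρ, V) a finite-dimensional irreducible representation. Suppose w ∈ V⊗V is a nonzero invariant vector for the tensor product representation and w̃ ∈ V*⊗V* is a nonzero invariant vector for the tensor product of the contragredient representations. Let φ : V* → V be φ(ζ) := (ζ⊗id_V)(w) and let ψ : V → V* be ψ(v) := (id_{V*}⊗ev_v)(w̃), where ev_v(ξ) := ξ(v). Then ψ is an isomorphism of representations from V to the contragredient representation on V*, and there exists a nonzero scalar c ∈ ℂ with φ∘ψ = c·id_V and ψ∘φ = c·id_{V*}. -/

import Mathlib

open TensorProduct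

/-- `ρ ⊗ ρ` applied to an element of `H ⊗ H`, as an endomorphism of `V ⊗ V`. -/
noncomputable def rep2 {H V : Type*} [Ring H] [HopfAlgebra ℂ H] [AddCommGroup V] [Module ℂ V]
    (ρ : H →ₐ[ℂ] Module.End ℂ V) (a : H ⊗[ℂ] H) : Module.End ℂ (V ⊗[ℂ] V) :=
  (TensorProduct.homTensorHomMap (RingHom.id ℂ) V V V V) ((TensorProduct.map ρ.toLinearMap ρ.toLinearMap) a)

/-- The contragredient representation `x ↦ (ρ(S(x)))ᵀ` on the dual space. -/
noncomputable def dualRep {H V : Type*} [Ring H] [HopfAlgebra ℂ H] [AddCommGroup V] [Module ℂ V]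
    (ρ : H →ₐ[ℂ] Module.End ℂ V) : H →ₗ[ℂ] Module.End ℂ (Module.Dual ℂ V) :=
  (Module.Dual.transpose (R := ℂ)) ∘ₗ ρ.toLinearMap ∘ₗ (HopfAlgebra.antipode (R := ℂ))

/-- `φ(ζ) = (ζ ⊗ id)(w)` : contraction of a functional against the first factor of `w`. -/
noncomputable def phiMap {V : Type*} [AddCommGroup V] [Module ℂ V] (w : V ⊗[ℂ] V) :
    Module.Dual ℂ V →ₗ[ℂ] V :=
  (TensorProduct.lid ℂ V).toLinearMap ∘ₗ (LinearMap.applyₗ w) ∘ₗ (LinearMap.rTensorHom V)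

/-- `ψ(v) = (id ⊗ ev_v)(w̃)` : contraction of a vector against the second factor of `w̃`. -/
noncomputable def psiMap {V : Type*} [AddCommGroup V] [Module ℂ V]
    (wt : Module.Dual ℂ V ⊗[ℂ] Module.Dual ℂ V) : V →ₗ[ℂ] Module.Dual ℂ V :=
  (TensorProduct.rid ℂ (Module.Dual ℂ V)).toLinearMap ∘ₗ (LinearMap.applyₗ wt)
    ∘ₗ (LinearMap.lTensorHom (Module.Dual ℂ V)) ∘ₗ (LinearMap.applyₗ)

/-- `ρ_{V*} ⊗ ρ_{V*}` applied to an element of `H ⊗ H`, as an endomorphism of `V* ⊗ V*`. -/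
noncomputable def rep2d {H V : Type*} [Ring H] [HopfAlgebra ℂ H] [AddCommGroup V] [Module ℂ V]
    (ρ : H →ₐ[ℂ] Module.End ℂ V) (a : H ⊗[ℂ] H) :
    Module.End ℂ (Module.Dual ℂ V ⊗[ℂ] Module.Dual ℂ V) :=
  (TensorProduct.homTensorHomMap (RingHom.id ℂ) _ _ _ _)
    ((TensorProduct.map (dualRep ρ) (dualRep ρ)) a)

namespace Stmt5Aux

open LinearMap Module

variable {H V : Type*} [Ring H] [HopfAlgebra ℂ H] [AddCommGroup V] [Module ℂ V]

/-- bundled version of `psiMap`. -/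
noncomputable def PsiL (V : Type*) [AddCommGroup V] [Module ℂ V] :
    (Module.Dual ℂ V ⊗[ℂ] Module.Dual ℂ V) →ₗ[ℂ] (V →ₗ[ℂ] Module.Dual ℂ V) :=
  dualTensorHom ℂ V (Module.Dual ℂ V) ∘ₗ (TensorProduct.comm ℂ _ _).toLinearMap

/-- bundled version of `phiMap`. -/
noncomputable def PhiL (V : Type*) [AddCommGroup V] [Module ℂ V] :
    (V ⊗[ℂ] V) →ₗ[ℂ] (Module.Dual ℂ V →ₗ[ℂ] V) :=
  dualTensorHom ℂ (Module.Dual ℂ V) V ∘ₗ (Module.Dual.eval ℂ V).rTensor V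

@[simp] lemma PsiL_tmul (η ξ : Module.Dual ℂ V) (v : V) :
    PsiL V (η ⊗ₜ[ℂ] ξ) v = ξ v • η := by
  simp [PsiL]

@[simp] lemma PhiL_tmul (u v : V) (ζ : Module.Dual ℂ V) :
    PhiL V (u ⊗ₜ[ℂ] v) ζ = ζ u • v := by
  simp [PhiL]

lemma psiMap_eq (wt : Module.Dual ℂ V ⊗[ℂ] Module.Dual ℂ V) : psiMap wt = PsiL V wt := by
  induction wt using TensorProduct.induction_on with
  | zero => ext v; simp [psiMap]
  | tmul η ξ => ext v; simp [psiMap]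
  | add a b ha hb =>
      ext v
      have : psiMap (a + b) v = psiMap a v + psiMap b v := by simp [psiMap]
      rw [this, ha, hb, map_add]; rfl

lemma phiMap_eq (w : V ⊗[ℂ] V) : phiMap w = PhiL V w := by
  induction w using TensorProduct.induction_on with
  | zero => ext ζ; simp [phiMap]
  | tmul u v => ext ζ; simp [phiMap]
  | add a b ha hb =>
      ext ζ
      have : phiMap (a + b) ζ = phiMap a ζ + phiMap b ζ := by simp [phiMap]
      rw [this, ha, hb, map_add]; rfl


section Main
variable (ρ : H →ₐ[ℂ] Module.End ℂ V)

noncomputable def anti (H : Type*) [Ring H] [HopfAlgebra ℂ H] : H →ₗ[ℂ] H :=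
  HopfAlgebra.antipode (R := ℂ)

noncomputable def conjBil {A B C D : Type*} [AddCommGroup A] [Module ℂ A]
    [AddCommGroup B] [Module ℂ B] [AddCommGroup C] [Module ℂ C] [AddCommGroup D] [Module ℂ D]
    (Ψ : B →ₗ[ℂ] C) : (C →ₗ[ℂ] D) →ₗ[ℂ] (A →ₗ[ℂ] B) →ₗ[ℂ] (A →ₗ[ℂ] D) :=
  LinearMap.mk₂ ℂ (fun f g => (f ∘ₗ Ψ) ∘ₗ g)
    (fun f f' g => by ext a; simp)
    (fun c f g => by ext a; simp)
    (fun f g g' => by ext a; simp)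
    (fun c f g => by ext a; simp)

@[simp] lemma conjBil_apply {A B C D : Type*} [AddCommGroup A] [Module ℂ A]
    [AddCommGroup B] [Module ℂ B] [AddCommGroup C] [Module ℂ C] [AddCommGroup D] [Module ℂ D]
    (Ψ : B →ₗ[ℂ] C) (f : C →ₗ[ℂ] D) (g : A →ₗ[ℂ] B) :
    conjBil Ψ f g = (f ∘ₗ Ψ) ∘ₗ g := rfl



/-- `a ⊗ b ↦ (ρ(Sa))ᵀ ∘ Ψw ∘ ρ(Sb)`. -/
noncomputable def Dpsi (Ψw : V →ₗ[ℂ] Module.Dual ℂ V) :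
    H ⊗[ℂ] H →ₗ[ℂ] (V →ₗ[ℂ] Module.Dual ℂ V) :=
  TensorProduct.lift ((conjBil Ψw ∘ₗ dualRep ρ).compl₂ (ρ.toLinearMap ∘ₗ anti H))

@[simp] lemma Dpsi_tmul (Ψw : V →ₗ[ℂ] Module.Dual ℂ V) (a b : H) :
    Dpsi ρ Ψw (a ⊗ₜ[ℂ] b)
      = ((dualRep ρ a : Module.Dual ℂ V →ₗ[ℂ] Module.Dual ℂ V) ∘ₗ Ψw)
          ∘ₗ (ρ (anti H b) : V →ₗ[ℂ] V) := rfl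

lemma PsiL_conj (a b : H) (wt : Module.Dual ℂ V ⊗[ℂ] Module.Dual ℂ V) :
    PsiL V (TensorProduct.map (dualRep ρ a) (dualRep ρ b) wt)
      = ((dualRep ρ a : Module.Dual ℂ V →ₗ[ℂ] Module.Dual ℂ V) ∘ₗ PsiL V wt)
          ∘ₗ (ρ (anti H b) : V →ₗ[ℂ] V) := by
  induction wt using TensorProduct.induction_on with
  | zero => ext v; simp
  | tmul η ξ =>
      ext v
      simp [dualRep, anti, Module.Dual.transpose_apply]
  | add s t hs ht =>
      ext v
      simp only [map_add, LinearMap.add_apply, hs, ht]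
      simp

lemma Dpsi_eq (wt : Module.Dual ℂ V ⊗[ℂ] Module.Dual ℂ V) (c : H ⊗[ℂ] H) :
    Dpsi ρ (PsiL V wt) c = PsiL V (rep2d ρ c wt) := by
  induction c using TensorProduct.induction_on with
  | zero => simp [rep2d]
  | tmul a b =>
      rw [Dpsi_tmul]
      have : rep2d ρ (a ⊗ₜ[ℂ] b) = TensorProduct.map (dualRep ρ a) (dualRep ρ b) := by
        simp [rep2d]
      rw [this, PsiL_conj]
  | add s t hs ht =>
      have : rep2d ρ (s + t) = rep2d ρ s + rep2d ρ t := by simp [rep2d]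
      rw [map_add, hs, ht, this]
      simp


noncomputable def Bpsi (Ψw : V →ₗ[ℂ] Module.Dual ℂ V) : H →ₗ[ℂ] (V →ₗ[ℂ] Module.Dual ℂ V) :=
  (LinearMap.llcomp ℂ V V (Module.Dual ℂ V) Ψw) ∘ₗ ρ.toLinearMap

@[simp] lemma Bpsi_apply (Ψw : V →ₗ[ℂ] Module.Dual ℂ V) (x : H) :
    Bpsi ρ Ψw x = Ψw ∘ₗ (ρ x : V →ₗ[ℂ] V) := rfl

noncomputable def F1psi (Ψw : V →ₗ[ℂ] Module.Dual ℂ V) :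
    H ⊗[ℂ] H →ₗ[ℂ] (V →ₗ[ℂ] Module.Dual ℂ V) :=
  Bpsi ρ Ψw ∘ₗ (TensorProduct.lid ℂ H).toLinearMap ∘ₗ (Coalgebra.counit (R := ℂ)).rTensor H

noncomputable def Gpsi (Ψw : V →ₗ[ℂ] Module.Dual ℂ V) :
    (H ⊗[ℂ] H) ⊗[ℂ] H →ₗ[ℂ] (V →ₗ[ℂ] Module.Dual ℂ V) :=
  TensorProduct.lift (((LinearMap.llcomp ℂ V V (Module.Dual ℂ V)) ∘ₗ Dpsi ρ Ψw).compl₂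
    ρ.toLinearMap)

@[simp] lemma Gpsi_tmul (Ψw : V →ₗ[ℂ] Module.Dual ℂ V) (c : H ⊗[ℂ] H) (b : H) :
    Gpsi ρ Ψw (c ⊗ₜ[ℂ] b) = Dpsi ρ Ψw c ∘ₗ (ρ b : V →ₗ[ℂ] V) := rfl

noncomputable def Kpsi (Ψw : V →ₗ[ℂ] Module.Dual ℂ V) :
    H ⊗[ℂ] H →ₗ[ℂ] (V →ₗ[ℂ] Module.Dual ℂ V) :=
  TensorProduct.lift ((conjBil Ψw ∘ₗ dualRep ρ).compl₂ ρ.toLinearMap)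

@[simp] lemma Kpsi_tmul (Ψw : V →ₗ[ℂ] Module.Dual ℂ V) (a b : H) :
    Kpsi ρ Ψw (a ⊗ₜ[ℂ] b)
      = ((dualRep ρ a : Module.Dual ℂ V →ₗ[ℂ] Module.Dual ℂ V) ∘ₗ Ψw)
          ∘ₗ (ρ b : V →ₗ[ℂ] V) := rfl

theorem psi_commL (wt : Module.Dual ℂ V ⊗[ℂ] Module.Dual ℂ V)
    (hwtinv : ∀ x : H,
      rep2d ρ (Coalgebra.comul (R := ℂ) x) wt = Coalgebra.counit (R := ℂ) x • wt) (x : H) :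
    PsiL V wt ∘ₗ (ρ x : V →ₗ[ℂ] V)
      = (dualRep ρ x : Module.Dual ℂ V →ₗ[ℂ] Module.Dual ℂ V) ∘ₗ PsiL V wt := by
  set Ψw := PsiL V wt with hΨ
  have hD : ∀ y : H, Dpsi ρ Ψw (Coalgebra.comul (R := ℂ) y)
      = Coalgebra.counit (R := ℂ) y • Ψw := by
    intro y; rw [hΨ, Dpsi_eq, hwtinv, map_smul]
  have h2 : F1psi ρ Ψw = Gpsi ρ Ψw ∘ₗ (Coalgebra.comul (R := ℂ)).rTensor H := by
    apply TensorProduct.ext'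
    intro a b
    simp only [F1psi, comp_apply, rTensor_tmul, lid_tmul, map_smul, Bpsi_apply, Gpsi_tmul]
    rw [hD]
    ext v; simp
  have h3 : Gpsi ρ Ψw
      = (Kpsi ρ Ψw ∘ₗ (LinearMap.mul' ℂ H ∘ₗ (anti H).rTensor H).lTensor H)
          ∘ₗ (TensorProduct.assoc ℂ H H H).toLinearMap := by
    apply TensorProduct.ext_threefold
    intro a b c
    simp only [Gpsi_tmul, Dpsi_tmul, comp_apply, LinearEquiv.coe_coe, assoc_tmul,
      lTensor_tmul, rTensor_tmul, mul'_apply, Kpsi_tmul]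
    ext v
    simp [map_mul, Module.End.mul_apply]
  -- now chain pointwise
  have e1 : Ψw ∘ₗ (ρ x : V →ₗ[ℂ] V) = F1psi ρ Ψw (Coalgebra.comul (R := ℂ) x) := by
    have h := LinearMap.congr_fun (Coalgebra.rTensor_counit_comp_comul (R := ℂ) (A := H)) x
    simp only [comp_apply] at h
    simp [F1psi, h]
  rw [e1, h2, h3]
  simp only [comp_apply, LinearEquiv.coe_coe, rTensor_comp_apply]
  rw [Coalgebra.coassoc_apply]
  rw [← lTensor_comp_apply]
  have hmu : ((LinearMap.mul' ℂ H ∘ₗ (anti H).rTensor H) ∘ₗ Coalgebra.comul (R := ℂ))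
      = (Algebra.linearMap ℂ H) ∘ₗ Coalgebra.counit (R := ℂ) := by
    rw [LinearMap.comp_assoc]
    exact HopfAlgebra.mul_antipode_rTensor_comul (R := ℂ)
  rw [hmu, lTensor_comp, comp_apply]
  have h4 := LinearMap.congr_fun (Coalgebra.lTensor_counit_comp_comul (R := ℂ) (A := H)) x
  simp only [comp_apply] at h4
  rw [h4]
  simp only [LinearMap.flip_apply, TensorProduct.mk_apply, lTensor_tmul,
    Algebra.linearMap_apply, map_one, Kpsi_tmul]
  ext v
  simp


/-- `x ↦ (ρ x)ᵀ` (no antipode). -/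
noncomputable def trRho : H →ₗ[ℂ] (Module.Dual ℂ V →ₗ[ℂ] Module.Dual ℂ V) :=
  (Module.Dual.transpose (R := ℂ)) ∘ₗ ρ.toLinearMap

lemma dualRep_eq (x : H) :
    (dualRep ρ x : Module.Dual ℂ V →ₗ[ℂ] Module.Dual ℂ V) = trRho ρ (anti H x) := rfl

noncomputable def Dphi (Φw : Module.Dual ℂ V →ₗ[ℂ] V) :
    H ⊗[ℂ] H →ₗ[ℂ] (Module.Dual ℂ V →ₗ[ℂ] V) :=
  TensorProduct.lift (((conjBil Φw ∘ₗ ρ.toLinearMap).compl₂ (trRho ρ)).flip)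

@[simp] lemma Dphi_tmul (Φw : Module.Dual ℂ V →ₗ[ℂ] V) (a b : H) :
    Dphi ρ Φw (a ⊗ₜ[ℂ] b) = ((ρ b : V →ₗ[ℂ] V) ∘ₗ Φw) ∘ₗ trRho ρ a := rfl

lemma PhiL_conj (a b : H) (w : V ⊗[ℂ] V) :
    PhiL V (TensorProduct.map (ρ a : V →ₗ[ℂ] V) (ρ b : V →ₗ[ℂ] V) w)
      = ((ρ b : V →ₗ[ℂ] V) ∘ₗ PhiL V w) ∘ₗ trRho ρ a := by
  induction w using TensorProduct.induction_on with
  | zero => ext ζ; simp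
  | tmul u v =>
      ext ζ
      simp [trRho, Module.Dual.transpose_apply]
  | add s t hs ht =>
      ext ζ
      simp only [map_add, LinearMap.add_apply, hs, ht]
      simp

lemma Dphi_eq (w : V ⊗[ℂ] V) (c : H ⊗[ℂ] H) :
    Dphi ρ (PhiL V w) c = PhiL V (rep2 ρ c w) := by
  induction c using TensorProduct.induction_on with
  | zero => simp [rep2]
  | tmul a b =>
      rw [Dphi_tmul]
      have : rep2 ρ (a ⊗ₜ[ℂ] b) = TensorProduct.map (ρ a : V →ₗ[ℂ] V) (ρ b : V →ₗ[ℂ] V) := by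
        simp [rep2]
      rw [this, PhiL_conj]
  | add s t hs ht =>
      have : rep2 ρ (s + t) = rep2 ρ s + rep2 ρ t := by simp [rep2]
      rw [map_add, hs, ht, this]
      simp

noncomputable def Cphi (Φw : Module.Dual ℂ V →ₗ[ℂ] V) :
    H →ₗ[ℂ] (Module.Dual ℂ V →ₗ[ℂ] V) :=
  (LinearMap.llcomp ℂ (Module.Dual ℂ V) (Module.Dual ℂ V) V Φw) ∘ₗ dualRep ρ

@[simp] lemma Cphi_apply (Φw : Module.Dual ℂ V →ₗ[ℂ] V) (x : H) :
    Cphi ρ Φw x = Φw ∘ₗ (dualRep ρ x : Module.Dual ℂ V →ₗ[ℂ] Module.Dual ℂ V) := rfl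

noncomputable def F1phi (Φw : Module.Dual ℂ V →ₗ[ℂ] V) :
    H ⊗[ℂ] H →ₗ[ℂ] (Module.Dual ℂ V →ₗ[ℂ] V) :=
  Cphi ρ Φw ∘ₗ (TensorProduct.rid ℂ H).toLinearMap ∘ₗ (Coalgebra.counit (R := ℂ)).lTensor H

noncomputable def Gphi (Φw : Module.Dual ℂ V →ₗ[ℂ] V) :
    H ⊗[ℂ] (H ⊗[ℂ] H) →ₗ[ℂ] (Module.Dual ℂ V →ₗ[ℂ] V) :=
  TensorProduct.lift ((((LinearMap.llcomp ℂ (Module.Dual ℂ V) (Module.Dual ℂ V) V)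
    ∘ₗ Dphi ρ Φw).compl₂ (trRho ρ ∘ₗ anti H)).flip)

@[simp] lemma Gphi_tmul (Φw : Module.Dual ℂ V →ₗ[ℂ] V) (a : H) (c : H ⊗[ℂ] H) :
    Gphi ρ Φw (a ⊗ₜ[ℂ] c) = Dphi ρ Φw c ∘ₗ trRho ρ (anti H a) := rfl

theorem phi_commL (w : V ⊗[ℂ] V)
    (hwinv : ∀ x : H,
      rep2 ρ (Coalgebra.comul (R := ℂ) x) w = Coalgebra.counit (R := ℂ) x • w) (x : H) :
    PhiL V w ∘ₗ (dualRep ρ x : Module.Dual ℂ V →ₗ[ℂ] Module.Dual ℂ V)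
      = (ρ x : V →ₗ[ℂ] V) ∘ₗ PhiL V w := by
  set Φw := PhiL V w with hΦ
  have hD : ∀ y : H, Dphi ρ Φw (Coalgebra.comul (R := ℂ) y)
      = Coalgebra.counit (R := ℂ) y • Φw := by
    intro y; rw [hΦ, Dphi_eq, hwinv, map_smul]
  have h2 : F1phi ρ Φw = Gphi ρ Φw ∘ₗ (Coalgebra.comul (R := ℂ)).lTensor H := by
    apply TensorProduct.ext'
    intro a b
    simp only [F1phi, comp_apply, lTensor_tmul, rid_tmul, map_smul, Cphi_apply, Gphi_tmul]
    rw [hD]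
    ext ζ; simp [dualRep_eq]
  have h3 : Gphi ρ Φw ∘ₗ (TensorProduct.assoc ℂ H H H).toLinearMap
      = Dphi ρ Φw ∘ₗ (LinearMap.mul' ℂ H ∘ₗ (anti H).rTensor H).rTensor H := by
    apply TensorProduct.ext_threefold
    intro a b c
    simp only [comp_apply, LinearEquiv.coe_coe, assoc_tmul, Gphi_tmul, Dphi_tmul,
      rTensor_tmul, mul'_apply]
    have hcomp : ∀ ζ : Module.Dual ℂ V, (ζ ∘ₗ (ρ (anti H a) : V →ₗ[ℂ] V)) ∘ₗ (ρ b : V →ₗ[ℂ] V)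
        = ζ ∘ₗ (ρ (anti H a * b) : V →ₗ[ℂ] V) := by
      intro ζ; ext v; simp [map_mul, Module.End.mul_apply]
    ext ζ
    simp [trRho, Module.Dual.transpose_apply, hcomp]
  have e1 : Φw ∘ₗ (dualRep ρ x : Module.Dual ℂ V →ₗ[ℂ] Module.Dual ℂ V)
      = F1phi ρ Φw (Coalgebra.comul (R := ℂ) x) := by
    have h := LinearMap.congr_fun (Coalgebra.lTensor_counit_comp_comul (R := ℂ) (A := H)) x
    simp only [comp_apply] at h
    simp [F1phi, h]
  rw [e1, h2]
  simp only [comp_apply]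
  rw [← Coalgebra.coassoc_apply, ← LinearEquiv.coe_coe, ← comp_apply, h3]
  simp only [comp_apply]
  rw [← rTensor_comp_apply]
  have hmu : ((LinearMap.mul' ℂ H ∘ₗ (anti H).rTensor H) ∘ₗ Coalgebra.comul (R := ℂ))
      = (Algebra.linearMap ℂ H) ∘ₗ Coalgebra.counit (R := ℂ) := by
    rw [LinearMap.comp_assoc]
    exact HopfAlgebra.mul_antipode_rTensor_comul (R := ℂ)
  rw [hmu, rTensor_comp, comp_apply]
  have h4 := LinearMap.congr_fun (Coalgebra.rTensor_counit_comp_comul (R := ℂ) (A := H)) x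
  simp only [comp_apply] at h4
  rw [h4]
  simp only [TensorProduct.mk_apply, rTensor_tmul, Algebra.linearMap_apply, map_one, Dphi_tmul]
  ext ζ
  simp [trRho, Module.Dual.transpose_apply, Module.End.one_eq_id, LinearMap.comp_id]


end Main

section Inj
variable {V : Type*} [AddCommGroup V] [Module ℂ V] [FiniteDimensional ℂ V]

lemma dualTensorHom_injective (N : Type*) [AddCommGroup N] [Module ℂ N]
    (M : Type*) [AddCommGroup M] [Module ℂ M] [Module.Finite ℂ M] [Module.Free ℂ M] :
    Function.Injective (dualTensorHom ℂ M N) := by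
  intro s t hst
  have := (dualTensorHomEquivOfBasis (N := N) (Module.Free.chooseBasis ℂ M)).injective
  apply this
  simpa [dualTensorHomEquivOfBasis_apply] using hst

lemma PsiL_injective : Function.Injective (PsiL V) := by
  have h1 := dualTensorHom_injective (Module.Dual ℂ V) V
  have h2 := (TensorProduct.comm ℂ (Module.Dual ℂ V) (Module.Dual ℂ V)).injective
  intro s t hst
  exact h2 (h1 hst)

lemma PhiL_injective : Function.Injective (PhiL V) := by
  have h1 := dualTensorHom_injective V (Module.Dual ℂ V)
  have h2 : Function.Injective ((Module.Dual.eval ℂ V).rTensor V) :=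
    Module.Flat.rTensor_preserves_injective_linearMap _ (Module.bijective_dual_eval ℂ V).1
  intro s t hst
  exact h2 (h1 hst)

end Inj
end Stmt5Aux

open Stmt5Aux

/-- with `w ∈ V ⊗ V` and `w̃ ∈ V* ⊗ V*` nonzero invariant vectors,
`ψ(v) = (id ⊗ ev_v)(w̃)` is an isomorphism of representations `V → V*`, and `φ` and `ψ`
are mutually inverse up to a nonzero scalar. -/
theorem stmt5 (H V : Type*) [Ring H] [HopfAlgebra ℂ H] [AddCommGroup V] [Module ℂ V]
    [FiniteDimensional ℂ V] (ρ : H →ₐ[ℂ] Module.End ℂ V)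
    (hirr : ∀ W : Submodule ℂ V, (∀ (x : H), ∀ u ∈ W, ρ x u ∈ W) → W = ⊥ ∨ W = ⊤)
    (w : V ⊗[ℂ] V) (hw0 : w ≠ 0)
    (hwinv : ∀ x : H, rep2 ρ (Coalgebra.comul (R := ℂ) x) w = Coalgebra.counit (R := ℂ) x • w)
    (wt : Module.Dual ℂ V ⊗[ℂ] Module.Dual ℂ V) (hwt0 : wt ≠ 0)
    (hwtinv : ∀ x : H,
      rep2d ρ (Coalgebra.comul (R := ℂ) x) wt = Coalgebra.counit (R := ℂ) x • wt) :
    Function.Bijective (psiMap wt)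
      ∧ (∀ (x : H) (u : V), psiMap wt (ρ x u) = dualRep ρ x (psiMap wt u))
      ∧ ∃ c : ℂ, c ≠ 0 ∧ (∀ u : V, phiMap w (psiMap wt u) = c • u)
          ∧ (∀ ζ : Module.Dual ℂ V, psiMap wt (phiMap w ζ) = c • ζ) := by
  classical
  set Ψ : V →ₗ[ℂ] Module.Dual ℂ V := PsiL V wt with hΨdef
  set Φ : Module.Dual ℂ V →ₗ[ℂ] V := PhiL V w with hΦdef
  have hψeq : psiMap wt = Ψ := psiMap_eq wt
  have hφeq : phiMap w = Φ := phiMap_eq w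
  have hVnt : Nontrivial V := by
    by_contra hn
    rw [not_nontrivial_iff_subsingleton] at hn
    exact hw0 (PhiL_injective (Subsingleton.elim (PhiL V w) (PhiL V 0)))
  have hψint : ∀ (x : H) (u : V), Ψ (ρ x u) = dualRep ρ x (Ψ u) := by
    intro x u
    simpa using LinearMap.congr_fun (psi_commL ρ wt hwtinv x) u
  have hφint : ∀ (x : H) (ζ : Module.Dual ℂ V), Φ (dualRep ρ x ζ) = ρ x (Φ ζ) := by
    intro x ζ
    simpa using LinearMap.congr_fun (phi_commL ρ w hwinv x) ζ
  -- ψ injective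
  have hΨne : Ψ ≠ 0 := by
    intro h
    exact hwt0 (PsiL_injective (by rw [← hΨdef, h, map_zero]))
  have hkerψ : LinearMap.ker Ψ = ⊥ := by
    rcases hirr (LinearMap.ker Ψ) (fun x u hu => by
      rw [LinearMap.mem_ker] at hu ⊢
      rw [hψint, hu, map_zero]) with h | h
    · exact h
    · exact absurd (LinearMap.ker_eq_top.mp h) hΨne
  have hψinj : Function.Injective Ψ := LinearMap.ker_eq_bot.mp hkerψ
  have hfr : Module.finrank ℂ V = Module.finrank ℂ (Module.Dual ℂ V) :=
    Subspace.dual_finrank_eq.symm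
  have hψsurj : Function.Surjective Ψ :=
    (LinearMap.injective_iff_surjective_of_finrank_eq_finrank hfr).mp hψinj
  -- φ surjective
  have hΦne : Φ ≠ 0 := by
    intro h
    exact hw0 (PhiL_injective (by rw [← hΦdef, h, map_zero]))
  have hrangeφ : LinearMap.range Φ = ⊤ := by
    rcases hirr (LinearMap.range Φ) (fun x u hu => by
      obtain ⟨ζ, rfl⟩ := hu
      exact ⟨dualRep ρ x ζ, hφint x ζ⟩) with h | h
    · exact absurd (LinearMap.range_eq_bot.mp h) hΦne
    · exact h
  have hφsurj : Function.Surjective Φ := LinearMap.range_eq_top.mp hrangeφ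
  -- Schur
  set E : Module.End ℂ V := Φ ∘ₗ Ψ with hEdef
  have hEcomm : ∀ (x : H) (u : V), E (ρ x u) = ρ x (E u) := by
    intro x u
    simp only [hEdef, LinearMap.comp_apply, hψint, hφint]
  obtain ⟨c, hc⟩ := Module.End.exists_eigenvalue E
  have hWne : Module.End.eigenspace E c ≠ ⊥ := hc
  have hWtop : Module.End.eigenspace E c = ⊤ := by
    rcases hirr (Module.End.eigenspace E c) (fun x u hu => by
      rw [Module.End.mem_eigenspace_iff] at hu ⊢
      rw [hEcomm, hu, map_smul]) with h | h
    · exact absurd h hWne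
    · exact h
  have hE : ∀ u : V, Φ (Ψ u) = c • u := by
    intro u
    have : u ∈ Module.End.eigenspace E c := hWtop ▸ Submodule.mem_top
    exact Module.End.mem_eigenspace_iff.mp this
  have hc0 : c ≠ 0 := by
    intro h0
    obtain ⟨v, hv⟩ := exists_ne (0 : V)
    obtain ⟨ζ, hζ⟩ := hφsurj v
    obtain ⟨u, hu⟩ := hψsurj ζ
    have : v = c • u := by rw [← hζ, ← hu, hE]
    rw [h0, zero_smul] at this
    exact hv this
  refine ⟨?_, ?_, c, hc0, ?_, ?_⟩
  · rw [hψeq]; exact ⟨hψinj, hψsurj⟩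
  · intro x u; rw [hψeq]; exact hψint x u
  · intro u; rw [hψeq, hφeq]; exact hE u
  · intro ζ
    rw [hψeq, hφeq]
    obtain ⟨u, rfl⟩ := hψsurj ζ
    rw [hE, map_smul]
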